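/- Let a > √3 and set x₀ = (3/(2a))·√((a² - 3)/2). Then the two points M± = (±x₀, 0, -3/(2a)) ∈ ℝ³ are equilibrium points of the reduced Fefferman equations with P = 1: the right-hand sides -M₂(M₃/a + 3/2), M₁(a·M₃ + 3/2), and (1/a - a)·M₁·M₂ all vanish at M±, and moreover H_a(M±, 1) = (1/2)(a·x₀² - 3·(-3/(2a)) - (9/8)(a + 1/a)) = 0, so M± lie on the light cone. (These equilibria correspond to closed chains; they are the elliptic fixed points inside the two lobes of the figure eight.) -/

import Mathlib

/-- For `a > √3`, the two points `M± = (±x₀, 0, -3/(2a))` with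
`x₀ = (3/(2a))·√((a² - 3)/2)` are equilibria of the reduced Fefferman equations with
`P = 1` (all right-hand sides vanish there) and they lie on the light cone `{H_a(·,1)=0}`. -/
theorem elliptic_equilibria (a : ℝ) (ha : Real.sqrt 3 < a)
    (x₀ : ℝ) (hx₀ : x₀ = (3 / (2 * a)) * Real.sqrt ((a ^ 2 - 3) / 2)) :
    ∀ s : ℝ, s = 1 ∨ s = -1 →
      ∀ M₁ M₂ M₃ : ℝ, M₁ = s * x₀ → M₂ = 0 → M₃ = -3 / (2 * a) →
        -M₂ * (M₃ / a + 3/2) = 0 ∧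
        M₁ * (a * M₃ + 3/2) = 0 ∧
        (1/a - a) * M₁ * M₂ = 0 ∧
        (1/2) * (a * M₁ ^ 2 + (1/a) * M₂ ^ 2 - 3 * M₃ - (9/8) * (a + 1/a)) = 0 := by
  intro s hs M₁ M₂ M₃ h1 h2 h3
  have ha0 : 0 < a := lt_of_le_of_lt (Real.sqrt_nonneg 3) ha
  have ha0' : a ≠ 0 := ne_of_gt ha0
  have ha3 : 3 < a ^ 2 := by
    have := Real.sq_sqrt (by norm_num : (3:ℝ) ≥ 0)
    nlinarith [Real.sqrt_nonneg 3]
  have hsq : Real.sqrt ((a ^ 2 - 3) / 2) ^ 2 = (a ^ 2 - 3) / 2 :=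
    Real.sq_sqrt (by linarith)
  have hs2 : s ^ 2 = 1 := by rcases hs with h | h <;> simp [h]
  refine ⟨by simp [h2], ?_, by simp [h2], ?_⟩
  · have : a * M₃ + 3/2 = 0 := by subst h3; field_simp; ring
    simp [this]
  · set r := Real.sqrt ((a ^ 2 - 3) / 2) with hr
    subst h1 h2 h3 hx₀
    have hsr : (s * r) ^ 2 = (a ^ 2 - 3) / 2 := by
      rw [mul_pow, hs2, one_mul, hsq]
    field_simp
    linear_combination 72 * hsr
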